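/- Every J*-homomorphism between J*-algebras is norm decreasing: if T : A → B is ℂ-linear with T(x x* x) = T(x) T(x)* T(x) for all x ∈ A, and T is bounded, then ‖T(x)‖ ≤ ‖x‖ for all x ∈ A. -/

import Mathlib

open Filter Topology

/-- The Jordan triple cube `x ↦ x x* x` inside a subspace closed under it. -/
def jcube {𝓐 : Type*} [NormedRing 𝓐] [StarRing 𝓐] [NormedAlgebra ℂ 𝓐]
    (S : Submodule ℂ 𝓐) (hS : ∀ a ∈ S, a * star a * a ∈ S) (x : S) : S :=
  ⟨(x : 𝓐) * star (x : 𝓐) * (x : 𝓐), hS x x.2⟩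

lemma norm_triple_eq {𝓐 : Type*} [NormedRing 𝓐] [StarRing 𝓐] [CStarRing 𝓐]
    (a : 𝓐) : ‖a * star a * a‖ = ‖a‖ ^ 3 := by
  rcases eq_or_ne a 0 with rfl | ha
  · simp
  have hpos : 0 < ‖a‖ := norm_pos_iff.mpr ha
  apply le_antisymm
  · calc ‖a * star a * a‖ ≤ ‖a * star a‖ * ‖a‖ := norm_mul_le _ _
      _ = ‖a‖ ^ 3 := by rw [CStarRing.norm_self_mul_star]; ring
  · have h4 : ‖a * star a * (a * star a)‖ = ‖a‖ ^ 4 := by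
      have hsa : IsSelfAdjoint (a * star a) := IsSelfAdjoint.mul_star_self a
      have := CStarRing.norm_self_mul_star (x := a * star a)
      rw [hsa.star_eq] at this
      rw [this, CStarRing.norm_self_mul_star]; ring
    have hle : ‖a‖ ^ 4 ≤ ‖a * star a * a‖ * ‖a‖ := by
      calc ‖a‖ ^ 4 = ‖a * star a * a * star a‖ := by rw [← h4, mul_assoc (a * star a) a (star a)]
        _ ≤ ‖a * star a * a‖ * ‖star a‖ := norm_mul_le _ _
        _ = ‖a * star a * a‖ * ‖a‖ := by rw [norm_star]
    have : ‖a‖ ^ 3 * ‖a‖ ≤ ‖a * star a * a‖ * ‖a‖ := by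
      calc ‖a‖ ^ 3 * ‖a‖ = ‖a‖ ^ 4 := by ring
        _ ≤ _ := hle
    exact le_of_mul_le_mul_right this hpos

/-- Every bounded J*-homomorphism is norm decreasing. -/
theorem jstar_hom_norm_decreasing {𝓐 𝓑 : Type*}
    [NormedRing 𝓐] [StarRing 𝓐] [CStarRing 𝓐] [NormedAlgebra ℂ 𝓐] [StarModule ℂ 𝓐]
    [CompleteSpace 𝓐]
    [NormedRing 𝓑] [StarRing 𝓑] [CStarRing 𝓑] [NormedAlgebra ℂ 𝓑] [StarModule ℂ 𝓑]
    [CompleteSpace 𝓑]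
    (A : Submodule ℂ 𝓐) (hA : IsClosed (A : Set 𝓐)) (hAc : ∀ a ∈ A, a * star a * a ∈ A)
    (B : Submodule ℂ 𝓑) (hB : IsClosed (B : Set 𝓑)) (hBc : ∀ b ∈ B, b * star b * b ∈ B)
    (T : A → B)
    (hadd : ∀ x y, T (x + y) = T x + T y)
    (hsmul : ∀ (c : ℂ) (x : A), T (c • x) = c • T x)
    (hcube : ∀ z : A, (T (jcube A hAc z) : 𝓑) = (T z : 𝓑) * star (T z : 𝓑) * (T z : 𝓑))
    (hbdd : ∃ C : ℝ, ∀ x : A, ‖(T x : 𝓑)‖ ≤ C * ‖(x : 𝓐)‖) :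
    ∀ x : A, ‖(T x : 𝓑)‖ ≤ ‖(x : 𝓐)‖ := by
  obtain ⟨C, hC⟩ := hbdd
  intro x
  by_contra hlt
  push_neg at hlt
  set s := ‖(x : 𝓐)‖ with hs
  set r := ‖(T x : 𝓑)‖ with hr
  have hrpos : 0 < r := lt_of_le_of_lt (norm_nonneg _) hlt
  -- iterate the cube
  set f : ℕ → A := fun n => (jcube A hAc)^[n] x with hf
  have hfn : ∀ n, ‖((f n : A) : 𝓐)‖ = s ^ 3 ^ n ∧ ‖(T (f n) : 𝓑)‖ = r ^ 3 ^ n := by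
    intro n
    induction n with
    | zero => simp [hf]; exact ⟨rfl, rfl⟩
    | succ n ih =>
      have hstep : f (n + 1) = jcube A hAc (f n) := by
        simp [hf, Function.iterate_succ_apply']
      constructor
      · rw [hstep]
        show ‖((f n : A) : 𝓐) * star _ * _‖ = _
        rw [norm_triple_eq, ih.1, ← pow_mul, pow_succ 3 n, mul_comm (3^n) 3, mul_comm 3 (3^n)]
      · rw [hstep, hcube, norm_triple_eq, ih.2, ← pow_mul, pow_succ 3 n]
  -- r^(3^n) ≤ C * s^(3^n)
  have key : ∀ n, r ^ 3 ^ n ≤ C * s ^ 3 ^ n := by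
    intro n
    have := hC (f n)
    rwa [(hfn n).1, (hfn n).2] at this
  have hspos : 0 ≤ s := norm_nonneg _
  rcases eq_or_lt_of_le hspos with hs0 | hspos'
  · -- s = 0, then r ≤ C*0 = 0 contradiction (n=0)
    have := key 0
    simp [← hs0] at this
    exact absurd (lt_of_lt_of_le hrpos this) (lt_irrefl 0)
  · have hratio : 1 < r / s := (one_lt_div hspos').mpr hlt
    obtain ⟨n, hn⟩ := pow_unbounded_of_one_lt C hratio
    have h3n : (r / s) ^ n ≤ (r / s) ^ 3 ^ n :=
      pow_le_pow_right₀ (le_of_lt hratio) (Nat.le_of_lt (Nat.lt_pow_self (by norm_num : 1 < 3) : n < 3 ^ n))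
    have : (r / s) ^ 3 ^ n ≤ C := by
      rw [div_pow, div_le_iff₀ (by positivity)]
      exact key n
    exact absurd (lt_of_lt_of_le hn (le_trans h3n this)) (lt_irrefl C)
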